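/- Majorization criterion (Mirsky, necessity direction): if a real symmetric n×n matrix has eigenvalues ω₁ ≥ … ≥ ω_n and diagonal entries a₁,…,a_n, then the diagonal vector is majorized by the eigenvalue vector: after sorting the a_i decreasingly, every partial sum a₁+…+a_k ≤ ω₁+…+ω_k (1 ≤ k ≤ n−1) and the total sums are equal. -/

import Mathlib

open Matrix Finset

lemma card_filter_val_lt (n k : ℕ) (hk : k ≤ n) :
    (univ.filter fun j : Fin n => (j : ℕ) < k).card = k := by
  rw [show (univ.filter fun j : Fin n => (j:ℕ) < k) =
      (Finset.range k).attachFin (fun m hm => lt_of_lt_of_le (Finset.mem_range.mp hm) hk) by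
    ext j; simp]
  exact Finset.card_attachFin _ _ |>.trans (Finset.card_range k)

lemma key_ineq {n k : ℕ} (hk : k < n) (c ω : Fin n → ℝ) (hc0 : ∀ j, 0 ≤ c j)
    (hc1 : ∀ j, c j ≤ 1) (hcs : ∑ j, c j = (k : ℝ)) (hω : Antitone ω) :
    ∑ j, c j * ω j ≤ ∑ j ∈ univ.filter (fun j : Fin n => (j : ℕ) < k), ω j := by
  set t : ℝ := ω ⟨k, hk⟩ with ht
  set χ : Fin n → ℝ := fun j => if (j : ℕ) < k then 1 else 0 with hχ
  have hχs : ∑ j, χ j = (k : ℝ) := by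
    rw [hχ]
    rw [Finset.sum_boole]
    rw [card_filter_val_lt n k hk.le]
  have hterm : ∀ j, (c j - χ j) * (ω j - t) ≤ 0 := by
    intro j
    by_cases hj : (j : ℕ) < k
    · apply mul_nonpos_of_nonpos_of_nonneg
      · simp [hχ, hj]; linarith [hc1 j]
      · have : j ≤ ⟨k, hk⟩ := by rw [Fin.le_def]; exact hj.le
        linarith [hω this]
    · apply mul_nonpos_of_nonneg_of_nonpos
      · simp [hχ, hj]; exact hc0 j
      · have : (⟨k, hk⟩ : Fin n) ≤ j := by rw [Fin.le_def]; exact Nat.le_of_not_lt hj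
        linarith [hω this]
  have hsum : ∑ j, (c j - χ j) * (ω j - t) ≤ 0 :=
    Finset.sum_nonpos fun j _ => hterm j
  have hexpand : ∑ j, (c j - χ j) * (ω j - t)
      = (∑ j, c j * ω j - ∑ j, χ j * ω j) - ((∑ j, c j) - ∑ j, χ j) * t := by
    simp only [sub_mul, mul_sub]
    rw [Finset.sum_sub_distrib, Finset.sum_sub_distrib, Finset.sum_sub_distrib,
      ← Finset.sum_mul, ← Finset.sum_mul]
  rw [hexpand, hcs, hχs, sub_self, zero_mul, sub_zero] at hsum
  have hfilter : ∑ j, χ j * ω j = ∑ j ∈ univ.filter (fun j : Fin n => (j : ℕ) < k), ω j := by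
    rw [Finset.sum_filter]
    refine Finset.sum_congr rfl fun j _ => ?_
    by_cases hj : (j : ℕ) < k <;> simp [hχ, hj]
  linarith [hsum, hfilter.symm.le]

/-- Schur–Horn / Mirsky necessity: the diagonal of a real symmetric
matrix is majorized by its eigenvalue vector: for decreasing rearrangements `a` of
the diagonal and `ω` of the eigenvalues, all partial sums of `a` are at most those
of `ω`, and the total sums agree. -/
theorem diag_majorized_by_eigenvalues (n : ℕ)
    (M : Matrix (Fin n) (Fin n) ℝ) (hM : M.IsHermitian)
    (a ω : Fin n → ℝ)
    (ha : ∃ σ : Equiv.Perm (Fin n), ∀ i, a i = M (σ i) (σ i))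
    (hω : ∃ τ : Equiv.Perm (Fin n), ∀ i, ω i = hM.eigenvalues (τ i))
    (ha' : Antitone a) (hω' : Antitone ω) :
    (∀ k : ℕ, k ≤ n - 1 →
        ∑ i ∈ Finset.univ.filter (fun i : Fin n => (i : ℕ) < k), a i ≤
          ∑ i ∈ Finset.univ.filter (fun i : Fin n => (i : ℕ) < k), ω i) ∧
      ∑ i, a i = ∑ i, ω i := by
  obtain ⟨σ, hσ⟩ := ha
  obtain ⟨τ, hτ⟩ := hω
  set U : Matrix (Fin n) (Fin n) ℝ := (hM.eigenvectorUnitary : Matrix (Fin n) (Fin n) ℝ) with hUdef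
  set S : Fin n → Fin n → ℝ := fun i j => (U (σ i) (τ j)) ^ 2 with hSdef
  have hS0 : ∀ i j, 0 ≤ S i j := fun i j => sq_nonneg _
  -- diagonal entry formula
  have hdiag : ∀ p, M p p = ∑ j, (U p j) ^ 2 * hM.eigenvalues j := by
    intro p
    conv_lhs => rw [hM.spectral_theorem]
    simp [Matrix.mul_apply, Matrix.diagonal_apply, Finset.sum_mul, Finset.mul_sum]
    refine Finset.sum_congr rfl fun j _ => ?_
    simp only [hUdef, Matrix.IsHermitian.eigenvectorUnitary_apply]
    ring
  have haS : ∀ i, a i = ∑ j, S i j * ω j := by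
    intro i
    rw [hσ, hdiag]
    rw [← Equiv.sum_comp τ (fun j => (U (σ i) j) ^ 2 * hM.eigenvalues j)]
    refine Finset.sum_congr rfl fun j _ => ?_
    rw [hτ]
  -- row sums
  have hU1 : U * star U = 1 := (Matrix.mem_unitaryGroup_iff).mp hM.eigenvectorUnitary.2
  have hU2 : star U * U = 1 := (Matrix.mem_unitaryGroup_iff').mp hM.eigenvectorUnitary.2
  have hrow : ∀ i, ∑ j, S i j = 1 := by
    intro i
    have h := congr_fun (congr_fun hU1 (σ i)) (σ i)
    simp [Matrix.mul_apply, Matrix.one_apply, Matrix.star_apply] at h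
    rw [hSdef]
    simp only []
    rw [Equiv.sum_comp τ (fun j => (U (σ i) j) ^ 2)]
    simpa [pow_two] using h
  have hcol : ∀ j, ∑ i, S i j = 1 := by
    intro j
    have h := congr_fun (congr_fun hU2 (τ j)) (τ j)
    simp [Matrix.mul_apply, Matrix.one_apply, Matrix.star_apply] at h
    rw [hSdef]
    simp only []
    rw [Equiv.sum_comp σ (fun i => (U i (τ j)) ^ 2)]
    simpa [pow_two] using h
  constructor
  · intro k hk
    rcases Nat.eq_zero_or_pos n with hn | hn
    · subst hn; simp
    have hkn : k < n := by omega
    set F := Finset.univ.filter (fun i : Fin n => (i : ℕ) < k) with hF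
    set c : Fin n → ℝ := fun j => ∑ i ∈ F, S i j with hc
    have h1 : ∑ i ∈ F, a i = ∑ j, c j * ω j := by
      rw [hc]
      simp only [Finset.sum_mul]
      rw [Finset.sum_comm]
      exact Finset.sum_congr rfl fun i _ => haS i
    rw [h1]
    apply key_ineq hkn c ω
    · intro j; exact Finset.sum_nonneg fun i _ => hS0 i j
    · intro j
      calc c j ≤ ∑ i, S i j :=
            Finset.sum_le_sum_of_subset_of_nonneg (Finset.subset_univ F)
              (fun i _ _ => hS0 i j)
        _ = 1 := hcol j
    · rw [hc]
      rw [Finset.sum_comm]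
      calc ∑ i ∈ F, ∑ j, S i j = ∑ i ∈ F, (1 : ℝ) :=
            Finset.sum_congr rfl fun i _ => hrow i
        _ = (F.card : ℝ) := by simp
        _ = (k : ℝ) := by rw [hF, card_filter_val_lt n k hkn.le]
    · exact hω'
  · calc ∑ i, a i = ∑ i, ∑ j, S i j * ω j := Finset.sum_congr rfl fun i _ => haS i
      _ = ∑ j, (∑ i, S i j) * ω j := by
          rw [Finset.sum_comm]; simp [Finset.sum_mul]
      _ = ∑ j, ω j := by
          refine Finset.sum_congr rfl fun j _ => ?_
          rw [hcol j, one_mul]
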